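/- For every N ≥ 1 and p ∈ (0,1), the Shannon entropy of the partially-labeled bipartite graph distribution satisfies the exact identity H_Bp(N,p) = N²·H(p) − log₂(N!) + Σ_ω P̄(ω)·log₂|Aut(ω)|, where the sum ranges over all row-equivalence classes ω, P̄(ω) is the probability of the class ω under the pushforward distribution, and |Aut(ω)| is the common size of the row stabilizer of matrices in ω. -/

import Mathlib

open Finset

attribute [local instance] Classical.propDecidable

noncomputable section

/-- Row equivalence of adjacency matrices: `A` and `B` are equivalent when some
permutation of the rows (i.e. a relabeling of the unlabeled vertex part) sends `A` to `B`. -/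
def rowRelSetoid (N : ℕ) : Setoid (Fin N → Fin N → Bool) where
  r A B := ∃ σ : Equiv.Perm (Fin N), ∀ i j, A (σ i) j = B i j
  iseqv := by
    refine ⟨fun A => ⟨1, fun i j => rfl⟩, ?_, ?_⟩
    · rintro A B ⟨σ, h⟩
      refine ⟨σ⁻¹, fun i j => ?_⟩
      rw [← h (σ⁻¹ i) j]
      simp
    · rintro A B C ⟨σ, h⟩ ⟨τ, h'⟩
      refine ⟨σ * τ, fun i j => ?_⟩
      rw [Equiv.Perm.mul_apply, h (τ i) j, h' i j]

instance (N : ℕ) : Fintype (Quotient (rowRelSetoid N)) := Fintype.ofFinite _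

/-- Number of `true` entries (edges) of an adjacency matrix. -/
def edgeCount {N : ℕ} (A : Fin N → Fin N → Bool) : ℕ :=
  (univ.filter fun ij : Fin N × Fin N => A ij.1 ij.2 = true).card

/-- Probability of a fixed adjacency matrix under i.i.d. Bernoulli(p) entries. -/
def matProb (N : ℕ) (p : ℝ) (A : Fin N → Fin N → Bool) : ℝ :=
  p ^ edgeCount A * (1 - p) ^ (N ^ 2 - edgeCount A)

/-- The pushforward probability of a row-equivalence class (the partially-labeled
bipartite graph distribution). -/
def classProb (N : ℕ) (p : ℝ) (ω : Quotient (rowRelSetoid N)) : ℝ :=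
  ∑ A : Fin N → Fin N → Bool,
    if Quotient.mk (rowRelSetoid N) A = ω then matProb N p A else 0

/-- Shannon entropy (base 2) of the partially-labeled bipartite graph distribution. -/
def HBp (N : ℕ) (p : ℝ) : ℝ :=
  ∑ ω : Quotient (rowRelSetoid N), -(classProb N p ω * Real.logb 2 (classProb N p ω))

/-- Binary entropy function, base 2. -/
def binEnt (p : ℝ) : ℝ := -(p * Real.logb 2 p) - (1 - p) * Real.logb 2 (1 - p)

/-- Size of the row stabilizer (automorphism group) of a matrix. -/
def autCard {N : ℕ} (A : Fin N → Fin N → Bool) : ℕ :=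
  Fintype.card {σ : Equiv.Perm (Fin N) // ∀ i j, A (σ i) j = A i j}
section Aux

variable {N : ℕ}

lemma edgeCount_le (A : Fin N → Fin N → Bool) : edgeCount A ≤ N ^ 2 := by
  have := Finset.card_filter_le (univ : Finset (Fin N × Fin N))
    (fun ij => A ij.1 ij.2 = true)
  simpa [edgeCount, sq] using this

lemma matProb_pos {p : ℝ} (hp0 : 0 < p) (hp1 : p < 1) (A : Fin N → Fin N → Bool) :
    0 < matProb N p A := by
  have : (0:ℝ) < 1 - p := by linarith
  exact mul_pos (pow_pos hp0 _) (pow_pos this _)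

lemma matProb_eq_prod (p : ℝ) (A : Fin N → Fin N → Bool) :
    matProb N p A = ∏ ij : Fin N × Fin N, (if A ij.1 ij.2 = true then p else 1 - p) := by
  rw [Finset.prod_ite (fun _ => p) (fun _ => (1 - p)), Finset.prod_const, Finset.prod_const]
  have hcard : (univ.filter fun ij : Fin N × Fin N => A ij.1 ij.2 = true).card
      + (univ.filter fun ij : Fin N × Fin N => ¬ (A ij.1 ij.2 = true)).card = N ^ 2 := by
    rw [Finset.card_filter_add_card_filter_not]
    simp [sq]
  have : (univ.filter fun ij : Fin N × Fin N => ¬ (A ij.1 ij.2 = true)).card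
      = N ^ 2 - edgeCount A := by
    unfold edgeCount; omega
  rw [matProb, this]
  congr 2

lemma sum_prod_entries (w : Fin N × Fin N → Bool → ℝ) :
    ∑ A : Fin N → Fin N → Bool, ∏ ij : Fin N × Fin N, w ij (A ij.1 ij.2)
      = ∏ ij : Fin N × Fin N, (w ij true + w ij false) := by
  rw [← Equiv.sum_comp (Equiv.curry (Fin N) (Fin N) Bool)
    (fun A => ∏ ij : Fin N × Fin N, w ij (A ij.1 ij.2))]
  have h1 : ∀ g : Fin N × Fin N → Bool,
      (∏ ij : Fin N × Fin N, w ij ((Equiv.curry (Fin N) (Fin N) Bool) g ij.1 ij.2))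
        = ∏ ij : Fin N × Fin N, w ij (g ij) := by
    intro g; exact Finset.prod_congr rfl (by simp [Equiv.curry])
  rw [Finset.sum_congr rfl (fun g _ => h1 g)]
  rw [← Fintype.piFinset_univ, ← Finset.prod_univ_sum (fun _ => (univ : Finset Bool)) w]
  exact Finset.prod_congr rfl (fun ij _ => by rw [Fintype.sum_bool])

lemma sum_matProb (p : ℝ) :
    ∑ A : Fin N → Fin N → Bool, matProb N p A = 1 := by
  have := sum_prod_entries (N := N) (fun _ b => if b = true then p else 1 - p)
  simp only [if_pos, if_neg] at this
  calc ∑ A : Fin N → Fin N → Bool, matProb N p A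
      = ∑ A : Fin N → Fin N → Bool, ∏ ij : Fin N × Fin N,
          (if A ij.1 ij.2 = true then p else 1 - p) :=
        Finset.sum_congr rfl (fun A _ => matProb_eq_prod p A)
    _ = ∏ _ij : Fin N × Fin N, ((if true = true then p else 1-p) + (if false = true then p else 1-p)) := this
    _ = 1 := by simp

lemma edgeCount_cast (A : Fin N → Fin N → Bool) :
    (edgeCount A : ℝ) = ∑ ij : Fin N × Fin N, (if A ij.1 ij.2 = true then (1:ℝ) else 0) := by
  unfold edgeCount
  rw [Finset.card_filter]
  push_cast
  exact Finset.sum_congr rfl (fun ij _ => by split <;> simp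

)

lemma sum_matProb_edge (p : ℝ) :
    ∑ A : Fin N → Fin N → Bool, matProb N p A * (edgeCount A : ℝ) = (N:ℝ)^2 * p := by
  have key : ∀ kl : Fin N × Fin N,
      ∑ A : Fin N → Fin N → Bool, matProb N p A * (if A kl.1 kl.2 = true then (1:ℝ) else 0) = p := by
    intro kl
    have hprod : ∀ A : Fin N → Fin N → Bool,
        matProb N p A * (if A kl.1 kl.2 = true then (1:ℝ) else 0)
          = ∏ ij : Fin N × Fin N,
              ((if A ij.1 ij.2 = true then p else 1 - p) * (if ij = kl then (if A ij.1 ij.2 = true then (1:ℝ) else 0) else 1)) := by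
      intro A
      rw [Finset.prod_mul_distrib, ← matProb_eq_prod]
      congr 1
      rw [Finset.prod_ite_eq' univ kl (fun ij => if A ij.1 ij.2 = true then (1:ℝ) else 0)]
      simp
    rw [Finset.sum_congr rfl (fun A _ => hprod A)]
    have := sum_prod_entries (N := N)
      (fun ij b => (if b = true then p else 1 - p) * (if ij = kl then (if b = true then (1:ℝ) else 0) else 1))
    rw [this]
    have : ∀ ij : Fin N × Fin N,
        ((if (true:Bool) = true then p else 1 - p) * (if ij = kl then (if (true:Bool) = true then (1:ℝ) else 0) else 1)
          + (if (false:Bool) = true then p else 1 - p) * (if ij = kl then (if (false:Bool) = true then (1:ℝ) else 0) else 1))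
        = (if ij = kl then p else 1) := by
      intro ij; by_cases h : ij = kl <;> simp [h]
    rw [Finset.prod_congr rfl (fun ij _ => this ij),
      Finset.prod_ite_eq' univ kl (fun _ => p)]
    simp
  calc ∑ A : Fin N → Fin N → Bool, matProb N p A * (edgeCount A : ℝ)
      = ∑ A : Fin N → Fin N → Bool, ∑ kl : Fin N × Fin N,
          matProb N p A * (if A kl.1 kl.2 = true then (1:ℝ) else 0) := by
        refine Finset.sum_congr rfl (fun A _ => ?_)
        rw [edgeCount_cast, Finset.mul_sum]
    _ = ∑ kl : Fin N × Fin N, ∑ A : Fin N → Fin N → Bool,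
          matProb N p A * (if A kl.1 kl.2 = true then (1:ℝ) else 0) := Finset.sum_comm
    _ = ∑ _kl : Fin N × Fin N, p := Finset.sum_congr rfl (fun kl _ => key kl)
    _ = (N:ℝ)^2 * p := by simp [sq]

end Aux
section ClassStruct

variable {N : ℕ}

lemma edgeCount_comp (σ : Equiv.Perm (Fin N)) (A : Fin N → Fin N → Bool) :
    edgeCount (fun i j => A (σ i) j) = edgeCount A := by
  unfold edgeCount
  refine Finset.card_bij' (fun ij _ => (σ ij.1, ij.2)) (fun ij _ => (σ⁻¹ ij.1, ij.2))
    ?_ ?_ ?_ ?_ <;> simp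

lemma matProb_eq_of_rel {p : ℝ} {A B : Fin N → Fin N → Bool}
    (h : (rowRelSetoid N).r A B) : matProb N p A = matProb N p B := by
  obtain ⟨σ, hσ⟩ := h
  have hB : B = fun i j => A (σ i) j := by funext i j; exact (hσ i j).symm
  rw [hB, matProb, matProb, edgeCount_comp]

/-- The finset of matrices in a given row-equivalence class. -/
def classSet (N : ℕ) (ω : Quotient (rowRelSetoid N)) : Finset (Fin N → Fin N → Bool) :=
  univ.filter fun A => Quotient.mk (rowRelSetoid N) A = ω

lemma out_mem_classSet (ω : Quotient (rowRelSetoid N)) :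
    Quotient.out ω ∈ classSet N ω := by
  simp [classSet, Quotient.out_eq]

lemma matProb_of_mem {p : ℝ} {ω : Quotient (rowRelSetoid N)} {A : Fin N → Fin N → Bool}
    (hA : A ∈ classSet N ω) : matProb N p A = matProb N p (Quotient.out ω) := by
  have h1 : Quotient.mk (rowRelSetoid N) A = ω := by simpa [classSet] using hA
  have h2 : Quotient.mk (rowRelSetoid N) A
      = Quotient.mk (rowRelSetoid N) (Quotient.out ω) := by
    rw [h1, Quotient.out_eq]
  exact matProb_eq_of_rel (Quotient.exact h2)

lemma classProb_eq (p : ℝ) (ω : Quotient (rowRelSetoid N)) :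
    classProb N p ω = ((classSet N ω).card : ℝ) * matProb N p (Quotient.out ω) := by
  rw [classProb, ← Finset.sum_filter]
  have hcs : (univ.filter fun A => Quotient.mk (rowRelSetoid N) A = ω) = classSet N ω := rfl
  rw [hcs, Finset.sum_congr rfl (fun A hA => matProb_of_mem hA)]
  rw [Finset.sum_const, nsmul_eq_mul]

lemma classCard_mul_autCard (ω : Quotient (rowRelSetoid N)) :
    (classSet N ω).card * autCard (Quotient.out ω) = N.factorial := by
  set A₀ := Quotient.out ω with hA₀
  set f : Equiv.Perm (Fin N) → (Fin N → Fin N → Bool) :=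
    (fun σ => fun i j => A₀ (σ i) j) with hf
  have himg : Finset.image f univ = classSet N ω := by
    ext B
    simp only [Finset.mem_image, Finset.mem_univ, true_and, classSet, Finset.mem_filter]
    constructor
    · rintro ⟨σ, rfl⟩
      rw [← Quotient.out_eq ω]
      exact Quotient.sound ⟨σ⁻¹, fun i j => by simp [hf, hA₀]⟩
    · intro hB
      have : (rowRelSetoid N).r B A₀ := Quotient.exact (by rw [hB, hA₀, Quotient.out_eq])
      obtain ⟨τ, hτ⟩ := this
      refine ⟨τ⁻¹, ?_⟩
      funext i j
      rw [hf]
      simp only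
      rw [← hτ (τ⁻¹ i) j, Equiv.Perm.inv_def, Equiv.apply_symm_apply]
  have hfiber : ∀ B ∈ classSet N ω,
      (univ.filter fun σ : Equiv.Perm (Fin N) => f σ = B).card = autCard A₀ := by
    intro B hB
    obtain ⟨τ, -, hτ⟩ : ∃ τ, τ ∈ (univ : Finset (Equiv.Perm (Fin N))) ∧ f τ = B := by
      rw [← himg] at hB; simpa [Finset.mem_image] using hB
    have haut : autCard A₀
        = (univ.filter fun ρ : Equiv.Perm (Fin N) => ∀ i j, A₀ (ρ i) j = A₀ i j).card := by
      rw [autCard, Fintype.card_subtype]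
    rw [haut]
    refine Finset.card_bij' (fun σ _ => σ * τ⁻¹) (fun ρ _ => ρ * τ) ?_ ?_ ?_ ?_
    · intro σ hσ
      simp only [Finset.mem_filter, Finset.mem_univ, true_and] at hσ ⊢
      have key : ∀ i j, A₀ (σ i) j = A₀ (τ i) j := by
        intro i j
        have := congrFun (congrFun (hσ.trans hτ.symm) i) j
        simpa [hf] using this
      intro i j
      have := key (τ⁻¹ i) j
      simpa [Equiv.Perm.mul_apply] using this
    · intro ρ hρ
      simp only [Finset.mem_filter, Finset.mem_univ, true_and] at hρ ⊢
      rw [← hτ]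
      funext i j
      simp only [hf, Equiv.Perm.mul_apply]
      exact hρ (τ i) j
    · intro σ hσ; group
    · intro ρ hρ; group
  have := Finset.card_eq_sum_card_image f (univ : Finset (Equiv.Perm (Fin N)))
  rw [himg, Finset.sum_congr rfl hfiber, Finset.sum_const, smul_eq_mul] at this
  rw [← this, Finset.card_univ, Fintype.card_perm, Fintype.card_fin]

lemma autCard_pos (A : Fin N → Fin N → Bool) : 0 < autCard A :=
  Fintype.card_pos_iff.mpr ⟨⟨1, fun _ _ => rfl⟩⟩

lemma sum_class (N : ℕ) (p : ℝ) (f : Quotient (rowRelSetoid N) → ℝ) :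
    ∑ ω : Quotient (rowRelSetoid N), classProb N p ω * f ω
      = ∑ A : Fin N → Fin N → Bool,
          matProb N p A * f (Quotient.mk (rowRelSetoid N) A) := by
  unfold classProb
  rw [Finset.sum_congr rfl (fun ω _ => by rw [Finset.sum_mul])]
  rw [Finset.sum_comm]
  refine Finset.sum_congr rfl (fun A _ => ?_)
  rw [Finset.sum_congr rfl (fun ω _ => by rw [ite_mul, zero_mul]),
    Finset.sum_ite_eq univ (Quotient.mk (rowRelSetoid N) A)
      (fun ω => matProb N p A * f ω)]
  simp

end ClassStruct
/-- Exact identity for the entropy of the partially-labeled bipartite graph distribution: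
`H_Bp(N,p) = N²·H(p) − log₂(N!) + Σ_ω P̄(ω)·log₂|Aut(ω)|`. -/
theorem partially_labeled_entropy_exact (N : ℕ) (hN : 1 ≤ N) (p : ℝ)
    (hp0 : 0 < p) (hp1 : p < 1) :
    HBp N p =
      (N : ℝ) ^ 2 * binEnt p - Real.logb 2 (N.factorial : ℝ)
        + ∑ ω : Quotient (rowRelSetoid N),
            classProb N p ω * Real.logb 2 ((autCard (Quotient.out ω) : ℝ)) := by
  have hq : (0:ℝ) < 1 - p := by linarith
  have hlogm : ∀ A : Fin N → Fin N → Bool,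
      Real.logb 2 (matProb N p A)
        = (edgeCount A : ℝ) * Real.logb 2 p
          + ((N:ℝ)^2 - (edgeCount A : ℝ)) * Real.logb 2 (1 - p) := by
    intro A
    rw [matProb, Real.logb_mul (by positivity) (by positivity),
      Real.logb_pow, Real.logb_pow]
    congr 2
    rw [Nat.cast_sub (edgeCount_le A)]
    push_cast
    ring
  have hlab : ∑ A : Fin N → Fin N → Bool, matProb N p A * Real.logb 2 (matProb N p A)
      = -((N:ℝ)^2 * binEnt p) := by
    rw [Finset.sum_congr rfl (fun A _ => by rw [hlogm A])]
    have expand : ∀ A : Fin N → Fin N → Bool,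
        matProb N p A * ((edgeCount A : ℝ) * Real.logb 2 p
            + ((N:ℝ)^2 - (edgeCount A : ℝ)) * Real.logb 2 (1 - p))
          = (matProb N p A * (edgeCount A : ℝ)) * Real.logb 2 p
            + ((N:ℝ)^2 * matProb N p A
                - matProb N p A * (edgeCount A : ℝ)) * Real.logb 2 (1 - p) := by
      intro A; ring
    rw [Finset.sum_congr rfl (fun A _ => expand A), Finset.sum_add_distrib,
      ← Finset.sum_mul, ← Finset.sum_mul, Finset.sum_sub_distrib,
      ← Finset.mul_sum, sum_matProb, sum_matProb_edge]
    rw [binEnt]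
    ring
  have hsum1 : ∑ ω : Quotient (rowRelSetoid N), classProb N p ω = 1 := by
    have := sum_class N p (fun _ => 1)
    simpa [sum_matProb] using this
  have hsumlogm : ∑ ω : Quotient (rowRelSetoid N),
      classProb N p ω * Real.logb 2 (matProb N p (Quotient.out ω))
        = -((N:ℝ)^2 * binEnt p) := by
    rw [sum_class N p (fun ω => Real.logb 2 (matProb N p (Quotient.out ω)))]
    have h2 : ∀ A : Fin N → Fin N → Bool,
        matProb N p (Quotient.out (Quotient.mk (rowRelSetoid N) A)) = matProb N p A :=
      fun A => matProb_eq_of_rel (Quotient.mk_out A)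
    rw [Finset.sum_congr rfl (fun A _ => by rw [h2 A])]
    exact hlab
  have hdecomp : ∀ ω : Quotient (rowRelSetoid N),
      -(classProb N p ω * Real.logb 2 (classProb N p ω))
        = classProb N p ω * Real.logb 2 ((autCard (Quotient.out ω) : ℝ))
          - classProb N p ω * Real.logb 2 (N.factorial : ℝ)
          - classProb N p ω * Real.logb 2 (matProb N p (Quotient.out ω)) := by
    intro ω
    have hc : (0:ℝ) < ((classSet N ω).card : ℝ) := by
      exact_mod_cast Finset.card_pos.mpr ⟨_, out_mem_classSet ω⟩
    have hm := matProb_pos hp0 hp1 (Quotient.out ω)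
    have ha : (0:ℝ) < ((autCard (Quotient.out ω)) : ℝ) := by
      exact_mod_cast autCard_pos (Quotient.out ω)
    have hfac : (N.factorial : ℝ)
        = ((classSet N ω).card : ℝ) * ((autCard (Quotient.out ω)) : ℝ) := by
      exact_mod_cast (classCard_mul_autCard ω).symm
    have hlogfac : Real.logb 2 (N.factorial : ℝ)
        = Real.logb 2 ((classSet N ω).card : ℝ)
          + Real.logb 2 ((autCard (Quotient.out ω)) : ℝ) := by
      rw [hfac, Real.logb_mul (ne_of_gt hc) (ne_of_gt ha)]
    rw [classProb_eq p ω, Real.logb_mul (ne_of_gt hc) (ne_of_gt hm), hlogfac]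
    ring
  unfold HBp
  rw [Finset.sum_congr rfl (fun ω _ => hdecomp ω), Finset.sum_sub_distrib,
    Finset.sum_sub_distrib, ← Finset.sum_mul, hsum1, hsumlogm, one_mul]
  ring
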